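/- arXiv:2106.05935 — 3 statements merged into one kernel-verified Lean document; each statement's English description precedes it below -/
import Mathlib

section
/- Define the norm N on ℝ³ by N(r,s,t) = max{|r|, |s|, (2/3)(|r|+|s|)} + |t|; this is an absolute normalized norm, and ℝ³ with N and the coordinatewise order is a Banach lattice. Let N* denote the dual norm, N*(u,v,w) = sup{u·r + v·s + w·t : N(r,s,t) ≤ 1}. Then the elements x = (3/4, −3/4, 0) and x* = (2/3, −2/3, 1) satisfy N(x) = 1, N*(x*) = 1 and x*·x = 1, yet N*(x*⁺)·N(x⁺) + N*(x*⁻)·N(x⁻) = 5/4 > 1, where for a vector w ∈ ℝ³, w⁺ and w⁻ denote the coordinatewise positive and negative parts. In particular this Banach lattice does not have the hereditary norm attaining property. -/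
/-- The norm `N(r,s,t) = max {|r|, |s|, (2/3)(|r|+|s|)} + |t|` on `ℝ³`. -/
noncomputable def N3 : ℝ × ℝ × ℝ → ℝ := fun x =>
  max (max |x.1| |x.2.1|) (2 / 3 * (|x.1| + |x.2.1|)) + |x.2.2|

/-- The dual norm of a norm `N` on `ℝ³`. -/
noncomputable def dualNorm3 (N : ℝ × ℝ × ℝ → ℝ) (w : ℝ × ℝ × ℝ) : ℝ :=
  sSup ((fun x : ℝ × ℝ × ℝ => w.1 * x.1 + w.2.1 * x.2.1 + w.2.2 * x.2.2) ''
    {x : ℝ × ℝ × ℝ | N x ≤ 1})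

lemma N3_facts {x : ℝ × ℝ × ℝ} (hx : N3 x ≤ 1) :
    ∃ M : ℝ, |x.1| ≤ M ∧ |x.2.1| ≤ M ∧ 2 / 3 * (|x.1| + |x.2.1|) ≤ M ∧
      M + |x.2.2| ≤ 1 := by
  refine ⟨max (max |x.1| |x.2.1|) (2 / 3 * (|x.1| + |x.2.1|)), ?_, ?_, ?_, hx⟩
  · exact le_max_of_le_left (le_max_left _ _)
  · exact le_max_of_le_left (le_max_right _ _)
  · exact le_max_right _ _

lemma dual1 : dualNorm3 N3 (2 / 3, -2 / 3, 1) = 1 := by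
  apply IsGreatest.csSup_eq
  constructor
  · refine ⟨(0, 0, 1), ?_, by norm_num⟩
    simp [N3, Set.mem_setOf_eq]
  · rintro v ⟨x, hx, rfl⟩
    obtain ⟨M, h1, h2, h3, h4⟩ := N3_facts hx
    have a1 := le_abs_self x.1
    have a2 := neg_abs_le x.2.1
    have a3 := le_abs_self x.2.2
    simp only
    nlinarith

lemma dual2 : dualNorm3 N3 (2 / 3, 0, 1) = 1 := by
  apply IsGreatest.csSup_eq
  constructor
  · refine ⟨(0, 0, 1), ?_, by norm_num⟩
    simp [N3, Set.mem_setOf_eq]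
  · rintro v ⟨x, hx, rfl⟩
    obtain ⟨M, h1, h2, h3, h4⟩ := N3_facts hx
    have a1 := le_abs_self x.1
    have a3 := le_abs_self x.2.2
    have a0 := abs_nonneg x.1
    simp only
    nlinarith

lemma dual3 : dualNorm3 N3 (0, 2 / 3, 0) = 2 / 3 := by
  apply IsGreatest.csSup_eq
  constructor
  · refine ⟨(0, 1, 0), ?_, by norm_num⟩
    simp [N3, Set.mem_setOf_eq]
    norm_num
  · rintro v ⟨x, hx, rfl⟩
    obtain ⟨M, h1, h2, h3, h4⟩ := N3_facts hx
    have a2 := le_abs_self x.2.1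
    have a3 := abs_nonneg x.2.2
    simp only
    nlinarith

/-- `N3` is an absolute normalized norm on `ℝ³`, and for
`x = (3/4, -3/4, 0)` and `x* = (2/3, -2/3, 1)` one has `N3 x = 1`, `N3*(x*) = 1` and
`x*·x = 1`, yet `N3*(x*⁺)·N3(x⁺) + N3*(x*⁻)·N3(x⁻) = 5/4 > 1` (positive and negative parts
taken coordinatewise); hence this Banach lattice fails the hereditary norm attaining
property. -/
theorem stmt15 :
    -- `N3` is a norm:
    (∀ x y : ℝ × ℝ × ℝ, N3 (x + y) ≤ N3 x + N3 y) ∧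
    (∀ (c : ℝ) (x : ℝ × ℝ × ℝ), N3 (c • x) = |c| * N3 x) ∧
    (∀ x : ℝ × ℝ × ℝ, N3 x = 0 → x = 0) ∧
    -- `N3` is absolute and normalized:
    (∀ x : ℝ × ℝ × ℝ, N3 (|x.1|, |x.2.1|, |x.2.2|) = N3 x) ∧
    N3 (1, 0, 0) = 1 ∧ N3 (0, 1, 0) = 1 ∧ N3 (0, 0, 1) = 1 ∧
    -- the counterexample:
    N3 (3 / 4, -3 / 4, 0) = 1 ∧
    dualNorm3 N3 (2 / 3, -2 / 3, 1) = 1 ∧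
    (2 / 3 : ℝ) * (3 / 4) + (-2 / 3) * (-3 / 4) + 1 * 0 = 1 ∧
    dualNorm3 N3 (2 / 3, 0, 1) * N3 (3 / 4, 0, 0) +
      dualNorm3 N3 (0, 2 / 3, 0) * N3 (0, 3 / 4, 0) = 5 / 4 ∧
    (1 : ℝ) < 5 / 4 := by
  refine ⟨?_, ?_, ?_, ?_, ?_, ?_, ?_, ?_, dual1, by norm_num, ?_, by norm_num⟩
  · intro x y
    simp only [N3, Prod.fst_add, Prod.snd_add]
    have t1 := abs_add_le x.1 y.1
    have t2 := abs_add_le x.2.1 y.2.1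
    have t3 := abs_add_le x.2.2 y.2.2
    have m1x : |x.1| ≤ max (max |x.1| |x.2.1|) (2/3*(|x.1|+|x.2.1|)) :=
      le_max_of_le_left (le_max_left _ _)
    have m2x : |x.2.1| ≤ max (max |x.1| |x.2.1|) (2/3*(|x.1|+|x.2.1|)) :=
      le_max_of_le_left (le_max_right _ _)
    have m3x : 2/3*(|x.1|+|x.2.1|) ≤ max (max |x.1| |x.2.1|) (2/3*(|x.1|+|x.2.1|)) :=
      le_max_right _ _
    have m1y : |y.1| ≤ max (max |y.1| |y.2.1|) (2/3*(|y.1|+|y.2.1|)) :=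
      le_max_of_le_left (le_max_left _ _)
    have m2y : |y.2.1| ≤ max (max |y.1| |y.2.1|) (2/3*(|y.1|+|y.2.1|)) :=
      le_max_of_le_left (le_max_right _ _)
    have m3y : 2/3*(|y.1|+|y.2.1|) ≤ max (max |y.1| |y.2.1|) (2/3*(|y.1|+|y.2.1|)) :=
      le_max_right _ _
    have hmax : max (max |x.1 + y.1| |x.2.1 + y.2.1|) (2/3*(|x.1 + y.1|+|x.2.1 + y.2.1|)) ≤
        max (max |x.1| |x.2.1|) (2/3*(|x.1|+|x.2.1|)) +
        max (max |y.1| |y.2.1|) (2/3*(|y.1|+|y.2.1|)) := by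
      apply max_le (max_le (by linarith) (by linarith)) (by linarith)
    linarith
  · intro c x
    simp only [N3, Prod.smul_fst, Prod.smul_snd, smul_eq_mul, abs_mul]
    conv_rhs => rw [mul_add, mul_max_of_nonneg _ _ (abs_nonneg c),
      mul_max_of_nonneg _ _ (abs_nonneg c)]
    congr 2
    ring
  · intro x hx
    simp only [N3] at hx
    have m1 : |x.1| ≤ max (max |x.1| |x.2.1|) (2/3*(|x.1|+|x.2.1|)) :=
      le_max_of_le_left (le_max_left _ _)
    have m2 : |x.2.1| ≤ max (max |x.1| |x.2.1|) (2/3*(|x.1|+|x.2.1|)) :=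
      le_max_of_le_left (le_max_right _ _)
    have a1 := abs_nonneg x.1
    have a2 := abs_nonneg x.2.1
    have a3 := abs_nonneg x.2.2
    have h1 : |x.1| = 0 := by linarith
    have h2 : |x.2.1| = 0 := by linarith
    have h3 : |x.2.2| = 0 := by linarith
    have := abs_eq_zero.mp h1
    have := abs_eq_zero.mp h2
    have := abs_eq_zero.mp h3
    exact Prod.ext (by assumption) (Prod.ext (by assumption) (by assumption))
  · intro x
    simp [N3, abs_abs]
  · norm_num [N3]
  · norm_num [N3]
  · norm_num [N3]
  · norm_num [N3]
  · rw [dual2, dual3]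
    norm_num [N3]
end

section
/- Let ‖·‖ be an absolute and normalized norm on ℝ². If c, d, e are nonnegative real numbers with d ≠ e and ‖(c,d)‖ = 1 = ‖(c,e)‖, then c = 1. -/
private lemma stmt17_aux (N : ℝ × ℝ → ℝ)
    (htri : ∀ x y : ℝ × ℝ, N (x + y) ≤ N x + N y)
    (hsmul : ∀ (c : ℝ) (x : ℝ × ℝ), N (c • x) = |c| * N x)
    (c d e : ℝ) (hc : 0 ≤ c) (hd : 0 ≤ d) (hlt : d < e)
    (hNc0 : N (c, 0) = c)
    (h1 : N (c, d) = 1) (h2 : N (c, e) = 1) : 1 ≤ c := by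
  have he : 0 < e := lt_of_le_of_lt hd hlt
  have hx : ((c, d) : ℝ × ℝ) = ((e - d) / e) • ((c, 0) : ℝ × ℝ) + (d / e) • ((c, e) : ℝ × ℝ) := by
    rw [Prod.ext_iff]
    constructor
    · simp only [Prod.smul_mk, Prod.mk_add_mk, smul_eq_mul]
      field_simp
      ring
    · simp only [Prod.smul_mk, Prod.mk_add_mk, smul_eq_mul]
      field_simp
      ring
  have key := htri (((e - d) / e) • ((c, 0) : ℝ × ℝ)) ((d / e) • ((c, e) : ℝ × ℝ))
  rw [← hx, h1, hsmul, hsmul, hNc0, h2,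
    abs_of_nonneg (div_nonneg (by linarith) he.le),
    abs_of_nonneg (div_nonneg hd he.le)] at key
  have h3 : e ≤ (e - d) * c + d := by
    have := mul_le_mul_of_nonneg_right key he.le
    field_simp at this
    linarith
  nlinarith

/-- For an absolute normalized norm on `ℝ²`: if `c, d, e ≥ 0`, `d ≠ e` and
`‖(c,d)‖ = 1 = ‖(c,e)‖`, then `c = 1`. -/
theorem stmt17 (N : ℝ × ℝ → ℝ)
    (htri : ∀ x y : ℝ × ℝ, N (x + y) ≤ N x + N y)
    (hsmul : ∀ (c : ℝ) (x : ℝ × ℝ), N (c • x) = |c| * N x)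
    (hdef : ∀ x : ℝ × ℝ, N x = 0 → x = 0)
    (habs : ∀ a b : ℝ, N (a, b) = N (|a|, |b|))
    (hn1 : N (1, 0) = 1) (hn2 : N (0, 1) = 1)
    (c d e : ℝ) (hc : 0 ≤ c) (hd : 0 ≤ d) (he : 0 ≤ e) (hde : d ≠ e)
    (h1 : N (c, d) = 1) (h2 : N (c, e) = 1) :
    c = 1 := by
  have hNc0 : N (c, 0) = c := by
    have := hsmul c (1, 0)
    simp only [Prod.smul_mk, smul_eq_mul, mul_one, mul_zero, hn1] at this
    rw [this, abs_of_nonneg hc]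
  -- c ≤ 1
  have hneg : N (c, -d) = 1 := by
    rw [habs, abs_neg, ← habs, h1]
  have hsum : ((c, d) : ℝ × ℝ) + (c, -d) = (2 : ℝ) • ((c, 0) : ℝ × ℝ) := by
    rw [Prod.ext_iff]; constructor <;> simp <;> ring
  have hle : c ≤ 1 := by
    have := htri (c, d) (c, -d)
    rw [hsum, hsmul, hNc0, h1, hneg] at this
    rw [abs_of_nonneg (by norm_num : (0:ℝ) ≤ 2)] at this
    linarith
  -- 1 ≤ c
  rcases lt_or_gt_of_ne hde with h | h
  · exact le_antisymm hle (stmt17_aux N htri hsmul c d e hc hd h hNc0 h1 h2)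
  · exact le_antisymm hle (stmt17_aux N htri hsmul c e d hc he h hNc0 h2 h1)
end

section
/- Let ‖·‖ be an absolute and normalized norm on ℝ² such that max{x ∈ ℝ : ‖(x,1)‖ = 1} = 0 and max{y ∈ ℝ : ‖(1,y)‖ = 1} = 0. Then for all r, s, t ∈ ℝ with |s| < |t|, one has ‖(r,s)‖ < ‖(r,t)‖ and ‖(s,r)‖ < ‖(t,r)‖. -/
theorem aux18 (N : ℝ × ℝ → ℝ)
    (htri : ∀ x y : ℝ × ℝ, N (x + y) ≤ N x + N y)
    (hsmul : ∀ (c : ℝ) (x : ℝ × ℝ), N (c • x) = |c| * N x)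
    (habs : ∀ a b : ℝ, N (a, b) = N (|a|, |b|))
    (hn1 : N (1, 0) = 1) (hn2 : N (0, 1) = 1)
    (hmax2 : IsGreatest {y : ℝ | N (1, y) = 1} 0)
    (r s t : ℝ) (hst : |s| < |t|) : N (r, s) < N (r, t) := by
  have hconv : ∀ (l : ℝ), 0 ≤ l → l ≤ 1 → ∀ x y : ℝ × ℝ,
      N (l • x + (1 - l) • y) ≤ l * N x + (1 - l) * N y := by
    intro l hl0 hl1 x y
    calc N (l • x + (1 - l) • y) ≤ N (l • x) + N ((1 - l) • y) := htri _ _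
    _ = l * N x + (1 - l) * N y := by
        rw [hsmul, hsmul, abs_of_nonneg hl0, abs_of_nonneg (by linarith)]
  have hmono : ∀ a b c : ℝ, 0 ≤ a → 0 ≤ b → b ≤ c → N (a, b) ≤ N (a, c) := by
    intro a b c ha hb hbc
    rcases eq_or_lt_of_le (hb.trans hbc) with hc | hc
    · have hb0 : b = 0 := le_antisymm (hbc.trans hc.symm.le) hb
      rw [hb0, ← hc]
    · set l : ℝ := (c + b) / (2 * c) with hl
      have hl0 : 0 ≤ l := by positivity
      have hl1 : l ≤ 1 := by
        rw [hl, div_le_one (by linarith)]; linarith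
      have key := hconv l hl0 hl1 (a, c) (a, -c)
      have hxy : l • ((a : ℝ), c) + (1 - l) • ((a : ℝ), -c) = (a, b) := by
        rw [Prod.ext_iff]
        constructor
        · simp; ring
        · simp only [Prod.smul_mk, Prod.mk_add_mk, smul_eq_mul, hl]
          field_simp
          ring
      have hneg : N (a, -c) = N (a, c) := by
        rw [habs a (-c), habs a c, abs_neg]
      rw [hxy, hneg] at key
      have : l * N (a, c) + (1 - l) * N (a, c) = N (a, c) := by ring
      linarith
  rw [habs r s, habs r t]
  set a := |r| with ha'
  set b := |s| with hb'
  set c := |t| with hc'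
  have ha : 0 ≤ a := abs_nonneg r
  have hb : 0 ≤ b := abs_nonneg s
  have hbc : b < c := hst
  have hc : 0 < c := lt_of_le_of_lt hb hbc
  by_contra hcon
  push_neg at hcon
  have heq : N (a, b) = N (a, c) := le_antisymm (hmono a b c ha hb hbc.le) hcon
  rcases eq_or_lt_of_le ha with ha0 | ha0
  · have hNb : N (a, b) = b := by
      rw [← ha0]
      have : ((0 : ℝ), b) = b • ((0 : ℝ), 1) := by simp
      rw [this, hsmul, hn2, abs_of_nonneg hb, mul_one]
    have hNc : N (a, c) = c := by
      rw [← ha0]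
      have : ((0 : ℝ), c) = c • ((0 : ℝ), 1) := by simp
      rw [this, hsmul, hn2, abs_of_nonneg hc.le, mul_one]
    rw [hNb, hNc] at heq
    linarith
  · -- a > 0
    set l : ℝ := (c - b) / c with hl
    have hl0 : 0 < l := div_pos (by linarith) hc
    have hl1 : l ≤ 1 := by rw [hl, div_le_one hc]; linarith
    have key := hconv l hl0.le hl1 (a, 0) (a, c)
    have hxy : l • ((a : ℝ), 0) + (1 - l) • ((a : ℝ), c) = (a, b) := by
      rw [Prod.ext_iff]
      constructor
      · simp; ring
      · simp only [Prod.smul_mk, Prod.mk_add_mk, smul_eq_mul, hl]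
        field_simp
        ring
    rw [hxy] at key
    have hNa0 : N (a, 0) = a := by
      have : ((a : ℝ), (0 : ℝ)) = a • ((1 : ℝ), (0 : ℝ)) := by simp
      rw [this, hsmul, hn1, abs_of_nonneg ha, mul_one]
    rw [hNa0, heq] at key
    -- key : N (a,c) ≤ l * a + (1-l) * N(a,c), so N(a,c) ≤ a
    have h1 : N (a, c) ≤ a := by nlinarith
    have h2 : a ≤ N (a, c) := by
      have := hmono a 0 c ha le_rfl hc.le
      rwa [hNa0] at this
    have hNac : N (a, c) = a := le_antisymm h1 h2
    have hone : N (1, c / a) = 1 := by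
      have : ((1 : ℝ), c / a) = (1 / a) • ((a : ℝ), c) := by
        rw [Prod.smul_mk]
        simp [smul_eq_mul]
        constructor
        · field_simp
        · ring
      rw [this, hsmul, hNac, abs_of_nonneg (by positivity : (0:ℝ) ≤ 1 / a)]
      field_simp
    have := hmax2.2 hone
    have : c / a ≤ 0 := this
    have hpos : 0 < c / a := by positivity
    linarith

/-- Let `N` be an absolute normalized norm on `ℝ²` such that
`max {x : ‖(x,1)‖ = 1} = 0` and `max {y : ‖(1,y)‖ = 1} = 0`. Then `|s| < |t|` implies
`‖(r,s)‖ < ‖(r,t)‖` and `‖(s,r)‖ < ‖(t,r)‖`. -/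
theorem stmt18 (N : ℝ × ℝ → ℝ)
    (htri : ∀ x y : ℝ × ℝ, N (x + y) ≤ N x + N y)
    (hsmul : ∀ (c : ℝ) (x : ℝ × ℝ), N (c • x) = |c| * N x)
    (hdef : ∀ x : ℝ × ℝ, N x = 0 → x = 0)
    (habs : ∀ a b : ℝ, N (a, b) = N (|a|, |b|))
    (hn1 : N (1, 0) = 1) (hn2 : N (0, 1) = 1)
    (hmax1 : IsGreatest {x : ℝ | N (x, 1) = 1} 0)
    (hmax2 : IsGreatest {y : ℝ | N (1, y) = 1} 0)
    (r s t : ℝ) (hst : |s| < |t|) :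
    N (r, s) < N (r, t) ∧ N (s, r) < N (t, r) := by
  constructor
  · exact aux18 N htri hsmul habs hn1 hn2 hmax2 r s t hst
  · exact aux18 (fun p => N (p.2, p.1))
      (fun x y => htri (x.2, x.1) (y.2, y.1))
      (fun c x => by
        have : ((c • x).2, (c • x).1) = c • ((x.2 : ℝ), x.1) := by
          simp [Prod.smul_mk]
        simp only [this, hsmul])
      (fun a b => habs b a) hn2 hn1 hmax1 r s t hst
end
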